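/- arXiv:1804.09744 — 3 statements merged into one kernel-verified Lean document; each statement's English description precedes it below -/
import Mathlib

section
/- For μ ∈ ℂ with Re μ > 0 and α ∈ (0, π], a holomorphic branch of w ↦ w^{1 - i·(Im μ)/(Re μ)} maps the spirallike sector Spir[μ, 2α, 0] bijectively onto the ordinary sector {ρe^{iθ} : ρ > 0, θ ∈ (-α, α)}. -/
open Complex

/-- The μ-spirallike sector of amplitude `2α` and center `e^{iθ₀}`. -/
def Spir (μ : ℂ) (α θ₀ : ℝ) : Set ℂ :=
  {w : ℂ | ∃ t θ : ℝ, θ ∈ Set.Ioo (θ₀ - α) (θ₀ + α) ∧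
      w = Complex.exp (t * μ + θ * Complex.I)}

noncomputable def tOf (μ w : ℂ) : ℝ := Real.log ‖w‖ / μ.re

noncomputable def thOf (μ w : ℂ) : ℝ := (w * Complex.exp (-(tOf μ w : ℂ) * μ)).arg

noncomputable def fOf (μ w : ℂ) : ℂ :=
  Complex.exp ((1 - Complex.I * (μ.im / μ.re)) *
    ((tOf μ w : ℂ) * μ + (thOf μ w : ℂ) * Complex.I))

lemma re_aux (μ : ℂ) (t θ : ℝ) : ((t : ℂ) * μ + (θ : ℂ) * Complex.I).re = t * μ.re := by
  simp [Complex.add_re, Complex.mul_re]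

lemma im_aux (μ : ℂ) (t θ : ℝ) : ((t : ℂ) * μ + (θ : ℂ) * Complex.I).im = t * μ.im + θ := by
  simp [Complex.add_im, Complex.mul_im]

lemma tOf_eq (μ : ℂ) (hμ : 0 < μ.re) (t θ : ℝ) :
    tOf μ (Complex.exp ((t : ℂ) * μ + (θ : ℂ) * Complex.I)) = t := by
  unfold tOf
  rw [Complex.norm_exp, Real.log_exp, re_aux]
  field_simp

lemma thOf_eq (μ : ℂ) (hμ : 0 < μ.re) (t θ : ℝ) (hθ : θ ∈ Set.Ioc (-Real.pi) Real.pi) :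
    thOf μ (Complex.exp ((t : ℂ) * μ + (θ : ℂ) * Complex.I)) = θ := by
  unfold thOf
  rw [tOf_eq μ hμ, ← Complex.exp_add]
  have h : (t : ℂ) * μ + (θ : ℂ) * Complex.I + -(t : ℂ) * μ = (θ : ℂ) * Complex.I := by ring
  rw [h, Complex.exp_mul_I]
  exact_mod_cast Complex.arg_cos_add_sin_mul_I hθ

lemma key_exponent (μ : ℂ) (hμ : 0 < μ.re) (t θ : ℝ) :
    (1 - Complex.I * (μ.im / μ.re)) * ((t : ℂ) * μ + (θ : ℂ) * Complex.I)
      = (((t * (μ.re ^ 2 + μ.im ^ 2) + θ * μ.im) / μ.re : ℝ) : ℂ) + (θ : ℂ) * Complex.I := by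
  have hne : μ.re ≠ 0 := hμ.ne'
  have hp : ((μ.re : ℂ) ^ 2).re = μ.re ^ 2 ∧ ((μ.im : ℂ) ^ 2).re = μ.im ^ 2 ∧
      ((μ.re : ℂ) ^ 2).im = 0 ∧ ((μ.im : ℂ) ^ 2).im = 0 := by
    norm_num [← Complex.ofReal_pow]
  apply Complex.ext <;>
    simp [Complex.add_re, Complex.add_im, Complex.mul_re, Complex.mul_im, hp.1, hp.2.1,
      hp.2.2.1, hp.2.2.2] <;>
    field_simp <;> ring

lemma fOf_eq (μ : ℂ) (hμ : 0 < μ.re) (t θ : ℝ) (hθ : θ ∈ Set.Ioc (-Real.pi) Real.pi) :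
    fOf μ (Complex.exp ((t : ℂ) * μ + (θ : ℂ) * Complex.I))
      = (Real.exp ((t * (μ.re ^ 2 + μ.im ^ 2) + θ * μ.im) / μ.re) : ℝ)
        * Complex.exp ((θ : ℂ) * Complex.I) := by
  unfold fOf
  rw [tOf_eq μ hμ, thOf_eq μ hμ t θ hθ, key_exponent μ hμ, Complex.exp_add,
    ← Complex.ofReal_exp]

/-- for `Re μ > 0` and `α ∈ (0, π]`, there is a holomorphic branch of
`w ↦ w^{1 - i (Im μ)/(Re μ)}` on `Spir[μ, 2α, 0]` (normalized so that
`exp(tμ) ↦ exp(tμ(1 - i Im μ / Re μ))`) mapping it bijectively onto the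
ordinary sector `{ρ e^{iθ} : ρ > 0, θ ∈ (-α, α)}`. -/
theorem spirallike_sector_straightening (μ : ℂ) (hμ : 0 < μ.re) (α : ℝ)
    (hα : α ∈ Set.Ioc 0 Real.pi) :
    ∃ f : ℂ → ℂ,
      DifferentiableOn ℂ f (Spir μ α 0) ∧
      -- `f` is a branch of `w ↦ w^{c}` with `c = 1 - i (Im μ)/(Re μ)`:
      (∀ w ∈ Spir μ α 0, ∃ l : ℂ, Complex.exp l = w ∧
          f w = Complex.exp ((1 - Complex.I * (μ.im / μ.re)) * l)) ∧
      -- normalization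
      (∀ t : ℝ, f (Complex.exp (t * μ)) =
          Complex.exp (t * μ * (1 - Complex.I * (μ.im / μ.re)))) ∧
      Set.BijOn f (Spir μ α 0)
        {w : ℂ | ∃ ρ θ : ℝ, 0 < ρ ∧ θ ∈ Set.Ioo (-α) α ∧
            w = ρ * Complex.exp (θ * Complex.I)} := by
  obtain ⟨hα0, hαπ⟩ := hα
  have hne : μ.re ≠ 0 := hμ.ne'
  have hs : 0 < μ.re ^ 2 + μ.im ^ 2 := by positivity
  set c : ℂ := 1 - Complex.I * (μ.im / μ.re) with hc
  have mem_spir : ∀ w, w ∈ Spir μ α 0 ↔ ∃ t θ : ℝ, θ ∈ Set.Ioo (-α) α ∧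
      w = Complex.exp ((t : ℂ) * μ + (θ : ℂ) * Complex.I) := by
    intro w
    simp [Spir, zero_sub, zero_add]
  have hIoc : ∀ θ : ℝ, θ ∈ Set.Ioo (-α) α → θ ∈ Set.Ioc (-Real.pi) Real.pi := by
    intro θ hθ
    exact ⟨by linarith [hθ.1], by linarith [hθ.2]⟩
  -- value of fOf on the sector
  have fval : ∀ t θ : ℝ, θ ∈ Set.Ioo (-α) α →
      fOf μ (Complex.exp ((t : ℂ) * μ + (θ : ℂ) * Complex.I))
        = (Real.exp ((t * (μ.re ^ 2 + μ.im ^ 2) + θ * μ.im) / μ.re) : ℝ)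
          * Complex.exp ((θ : ℂ) * Complex.I) :=
    fun t θ hθ => fOf_eq μ hμ t θ (hIoc θ hθ)
  refine ⟨fOf μ, ?_, ?_, ?_, ?_, ?_, ?_⟩
  · -- DifferentiableOn
    intro w₀ hw₀
    obtain ⟨t₀, θ₀, hθ₀, hw₀e⟩ := (mem_spir w₀).1 hw₀
    set a : ℂ := (t₀ : ℂ) * μ + (θ₀ : ℂ) * Complex.I with ha
    have h1 : w₀ * Complex.exp (-a) = 1 := by
      rw [hw₀e, ← Complex.exp_add]
      simp
    set g : ℂ → ℂ := fun w => Complex.exp (c * (Complex.log (w * Complex.exp (-a)) + a)) with hg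
    have hgd : DifferentiableAt ℂ g w₀ := by
      apply DifferentiableAt.cexp
      apply DifferentiableAt.const_mul
      apply DifferentiableAt.add_const
      apply DifferentiableAt.clog
      · exact differentiableAt_id.mul_const _
      · rw [h1]; exact Complex.one_mem_slitPlane
    set ε : ℝ := 2 * Real.pi - (α + |θ₀|) with hε
    have hθ₀abs : |θ₀| < α := abs_lt.2 ⟨hθ₀.1, hθ₀.2⟩
    have hεpos : 0 < ε := by
      have hππ : α ≤ Real.pi := hαπ
      have : |θ₀| < Real.pi := lt_of_lt_of_le hθ₀abs hππ
      simp only [hε]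
      linarith
    have claim : ∀ w ∈ Spir μ α 0,
        |(Complex.log (w * Complex.exp (-a))).im| + |tOf μ w - t₀| * |μ.im| < ε →
        fOf μ w = g w := by
      intro w hw hsmall
      obtain ⟨t, θ, hθ, hwe⟩ := (mem_spir w).1 hw
      have ht : tOf μ w = t := by rw [hwe]; exact tOf_eq μ hμ t θ
      have hth : thOf μ w = θ := by rw [hwe]; exact thOf_eq μ hμ t θ (hIoc θ hθ)
      set L : ℂ := Complex.log (w * Complex.exp (-a)) with hL
      have hwne : w ≠ 0 := by rw [hwe]; exact Complex.exp_ne_zero _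
      have hLexp : Complex.exp L = w * Complex.exp (-a) :=
        Complex.exp_log (mul_ne_zero hwne (Complex.exp_ne_zero _))
      have hLa : Complex.exp (L + a) = w := by
        rw [Complex.exp_add, hLexp, mul_assoc, ← Complex.exp_add]
        simp
      have hexp : Complex.exp ((t : ℂ) * μ + (θ : ℂ) * Complex.I) = Complex.exp (L + a) := by
        rw [hLa]; exact hwe.symm
      obtain ⟨n, hn⟩ := Complex.exp_eq_exp_iff_exists_int.1 hexp
      have him := congrArg Complex.im hn
      rw [im_aux] at him
      have h2 : (L + a + (n : ℂ) * (2 * (Real.pi : ℂ) * Complex.I)).im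
          = L.im + (t₀ * μ.im + θ₀) + n * (2 * Real.pi) := by
        simp [ha, Complex.add_im, Complex.mul_im, Complex.mul_re, Complex.mul_I_im]
        try ring
      rw [h2] at him
      have hn0 : n = 0 := by
        have heq : (n : ℝ) * (2 * Real.pi) = (t - t₀) * μ.im + (θ - θ₀) - L.im := by
          linarith [him]
        have h3 : |(n : ℝ) * (2 * Real.pi)| ≤ |t - t₀| * |μ.im| + |θ - θ₀| + |L.im| := by
          rw [heq]
          calc |(t - t₀) * μ.im + (θ - θ₀) - L.im|
              ≤ |(t - t₀) * μ.im + (θ - θ₀)| + |L.im| := abs_sub _ _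
            _ ≤ |(t - t₀) * μ.im| + |θ - θ₀| + |L.im| := by
                gcongr
                exact abs_add_le _ _
            _ = |t - t₀| * |μ.im| + |θ - θ₀| + |L.im| := by rw [abs_mul]
        have hθdiff : |θ - θ₀| ≤ |θ| + |θ₀| := abs_sub _ _
        have hθa : |θ| < α := abs_lt.2 ⟨hθ.1, hθ.2⟩
        rw [ht] at hsmall
        have h4 : |(n : ℝ) * (2 * Real.pi)| < 2 * Real.pi := by
          calc |(n : ℝ) * (2 * Real.pi)| ≤ |t - t₀| * |μ.im| + |θ - θ₀| + |L.im| := h3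
            _ < ε + (α + |θ₀|) := by
                have h5 : |t - t₀| * |μ.im| + |L.im| < ε := by linarith [hsmall]
                linarith [hθdiff]
            _ = 2 * Real.pi := by simp only [hε]; ring
        have h2π : (0 : ℝ) < 2 * Real.pi := by positivity
        rw [abs_mul, abs_of_pos h2π] at h4
        have h6 : |(n : ℝ)| < 1 := by
          nlinarith [abs_nonneg (n : ℝ)]
        have h7 : ((|n| : ℤ) : ℝ) < 1 := by rwa [Int.cast_abs]
        have h8 : |n| < 1 := by exact_mod_cast h7
        have := abs_lt.mp h8
        omega
      rw [hn0] at hn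
      norm_num at hn
      have hval : fOf μ w = Complex.exp (c * ((t : ℂ) * μ + (θ : ℂ) * Complex.I)) := by
        unfold fOf
        rw [ht, hth]
      rw [hval, hn]
    have hcont : ContinuousAt (fun w => |(Complex.log (w * Complex.exp (-a))).im|
        + |tOf μ w - t₀| * |μ.im|) w₀ := by
      apply ContinuousAt.add
      · apply ContinuousAt.abs
        apply Complex.continuous_im.continuousAt.comp
        apply ContinuousAt.clog
        · exact (continuous_id.mul continuous_const).continuousAt
        · rw [h1]; exact Complex.one_mem_slitPlane
      · apply ContinuousAt.mul _ continuousAt_const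
        apply ContinuousAt.abs
        apply ContinuousAt.sub _ continuousAt_const
        unfold tOf
        apply ContinuousAt.div _ continuousAt_const hne
        apply ContinuousAt.comp (Real.continuousAt_log ?_) continuous_norm.continuousAt
        rw [hw₀e]
        simp [Complex.norm_exp, Real.exp_ne_zero]
    have hval0 : |(Complex.log (w₀ * Complex.exp (-a))).im|
        + |tOf μ w₀ - t₀| * |μ.im| = 0 := by
      have ht₀ : tOf μ w₀ = t₀ := by rw [hw₀e, ha]; exact tOf_eq μ hμ t₀ θ₀
      simp [h1, Complex.log_one, ht₀]
    have hev : ∀ᶠ w in nhds w₀, |(Complex.log (w * Complex.exp (-a))).im|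
        + |tOf μ w - t₀| * |μ.im| < ε := by
      have h := hcont
      rw [ContinuousAt, hval0] at h
      exact h.eventually_lt_const hεpos
    have heqev : fOf μ =ᶠ[nhdsWithin w₀ (Spir μ α 0)] g := by
      filter_upwards [nhdsWithin_le_nhds hev, self_mem_nhdsWithin] with w hw1 hw2
      exact claim w hw2 hw1
    have heq0 : fOf μ w₀ = g w₀ := claim w₀ hw₀ (by rw [hval0]; exact hεpos)
    exact (hgd.differentiableWithinAt).congr_of_eventuallyEq heqev heq0
  · -- branch property
    intro w hw
    obtain ⟨t, θ, hθ, hwe⟩ := (mem_spir w).1 hw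
    refine ⟨(t : ℂ) * μ + (θ : ℂ) * Complex.I, hwe.symm, ?_⟩
    rw [hwe]
    unfold fOf
    rw [tOf_eq μ hμ, thOf_eq μ hμ t θ (hIoc θ hθ)]
  · -- normalization
    intro t
    have h0 : ((t : ℂ) * μ) = ((t : ℂ) * μ + ((0 : ℝ) : ℂ) * Complex.I) := by push_cast; ring
    rw [h0]
    unfold fOf
    rw [tOf_eq μ hμ t 0, thOf_eq μ hμ t 0 (hIoc 0 ⟨by linarith, hα0⟩)]
    push_cast
    ring_nf
    rw [hc]
    congr 1
    ring
  · -- MapsTo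
    intro w hw
    obtain ⟨t, θ, hθ, hwe⟩ := (mem_spir w).1 hw
    rw [hwe, fval t θ hθ]
    exact ⟨Real.exp ((t * (μ.re ^ 2 + μ.im ^ 2) + θ * μ.im) / μ.re), θ,
      Real.exp_pos _, hθ, rfl⟩
  · -- InjOn
    intro w₁ hw₁ w₂ hw₂ hfe
    obtain ⟨t₁, θ₁, hθ₁, hwe₁⟩ := (mem_spir w₁).1 hw₁
    obtain ⟨t₂, θ₂, hθ₂, hwe₂⟩ := (mem_spir w₂).1 hw₂
    rw [hwe₁, hwe₂] at hfe ⊢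
    rw [fval t₁ θ₁ hθ₁, fval t₂ θ₂ hθ₂] at hfe
    set r₁ := (t₁ * (μ.re ^ 2 + μ.im ^ 2) + θ₁ * μ.im) / μ.re with hr₁
    set r₂ := (t₂ * (μ.re ^ 2 + μ.im ^ 2) + θ₂ * μ.im) / μ.re with hr₂
    have habs := congrArg norm hfe
    simp only [norm_mul, Complex.norm_real, Real.norm_eq_abs, Complex.norm_exp] at habs
    have hre : ∀ θ : ℝ, ((θ : ℂ) * Complex.I).re = 0 := by
      intro θ; simp [Complex.mul_re]
    rw [hre θ₁, hre θ₂, Real.exp_zero, mul_one, mul_one,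
      abs_of_pos (Real.exp_pos r₁), abs_of_pos (Real.exp_pos r₂)] at habs
    have hrr : r₁ = r₂ := Real.exp_injective habs
    have hee : Complex.exp ((θ₁ : ℂ) * Complex.I) = Complex.exp ((θ₂ : ℂ) * Complex.I) := by
      have hne' : ((Real.exp r₁ : ℝ) : ℂ) ≠ 0 := by
        exact_mod_cast (Real.exp_pos r₁).ne'
      rw [hrr] at hfe
      exact mul_left_cancel₀ (by exact_mod_cast (Real.exp_pos r₂).ne') hfe
    have hargθ : θ₁ = θ₂ := by
      have a1 : (Complex.exp ((θ₁ : ℂ) * Complex.I)).arg = θ₁ := by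
        rw [Complex.exp_mul_I]
        exact_mod_cast Complex.arg_cos_add_sin_mul_I (hIoc θ₁ hθ₁)
      have a2 : (Complex.exp ((θ₂ : ℂ) * Complex.I)).arg = θ₂ := by
        rw [Complex.exp_mul_I]
        exact_mod_cast Complex.arg_cos_add_sin_mul_I (hIoc θ₂ hθ₂)
      rw [← a1, ← a2, hee]
    have htt : t₁ = t₂ := by
      rw [hr₁, hr₂, hargθ] at hrr
      field_simp at hrr
      have h' : (t₁ - t₂) * (μ.re ^ 2 + μ.im ^ 2) = 0 := by linarith
      rcases mul_eq_zero.1 h' with h | h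
      · linarith
      · exact absurd h hs.ne'
    rw [htt, hargθ]
  · -- SurjOn
    intro z hz
    obtain ⟨ρ, θ, hρ, hθ, hze⟩ := hz
    set t : ℝ := (Real.log ρ * μ.re - θ * μ.im) / (μ.re ^ 2 + μ.im ^ 2) with hts
    refine ⟨Complex.exp ((t : ℂ) * μ + (θ : ℂ) * Complex.I), (mem_spir _).2 ⟨t, θ, hθ, rfl⟩, ?_⟩
    rw [fval t θ hθ]
    have hr : (t * (μ.re ^ 2 + μ.im ^ 2) + θ * μ.im) / μ.re = Real.log ρ := by
      rw [hts]
      field_simp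
      ring
    rw [hr, Real.exp_log hρ, hze]
end

section
/- For every c > 1 and M > 0 there exists R > 0 such that for every p in the unit disc 𝔻, and all z, w in the hyperbolic disc D^{hyp}(p, M) of center p and radius M, the hyperbolic distance of the domain D^{hyp}(p, R) satisfies k_{D^{hyp}(p,R)}(z, w) ≤ c·ω(z, w), where ω is the hyperbolic distance of 𝔻. -/
/-- The Poincaré (hyperbolic) distance of the unit disc, with density `1/(1-|z|²)`:
`ω(z,w) = arctanh |(z-w)/(1 - z̄ w)|`, where `arctanh x = ½ log((1+x)/(1-x))`. -/
noncomputable def poincare (z w : ℂ) : ℝ :=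
  (1 / 2) * Real.log ((1 + ‖(z - w) / (1 - (starRingEnd ℂ) z * w)‖) /
    (1 - ‖(z - w) / (1 - (starRingEnd ℂ) z * w)‖))

/-- The hyperbolic disc `D^{hyp}(p, R)` of center `p ∈ 𝔻` and radius `R`. -/
def hypDisc (p : ℂ) (R : ℝ) : Set ℂ :=
  {z ∈ Metric.ball (0:ℂ) 1 | poincare z p < R}

open Complex Metric Set

noncomputable def Complex.abs : AbsoluteValue ℂ ℝ where
  toFun := fun z => ‖z‖
  map_mul' := norm_mul
  nonneg' := norm_nonneg
  eq_zero' _ := norm_eq_zero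
  add_le' := norm_add_le

lemma Complex.sq_abs (z : ℂ) : Complex.abs z ^ 2 = Complex.normSq z := Complex.sq_norm z

lemma Complex.abs_conj (z : ℂ) : Complex.abs ((starRingEnd ℂ) z) = Complex.abs z :=
  RCLike.norm_conj z

lemma Complex.abs_ofReal (r : ℝ) : Complex.abs (r : ℂ) = |r| := Complex.norm_real r

lemma Complex.abs_le_abs_of_mapsTo_ball_self {f : ℂ → ℂ} {z : ℂ} {R : ℝ}
    (hd : DifferentiableOn ℂ f (ball 0 R)) (h_maps : MapsTo f (ball 0 R) (ball 0 R))
    (h₀ : f 0 = 0) (hz : Complex.abs z < R) : Complex.abs (f z) ≤ Complex.abs z :=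
  Complex.norm_le_norm_of_mapsTo_ball hd (h_maps.mono_right ball_subset_closedBall) h₀ hz

noncomputable def atanh' (x : ℝ) : ℝ := (1/2) * Real.log ((1+x)/(1-x))

noncomputable def rho (z w : ℂ) : ℝ := Complex.abs ((z - w) / (1 - (starRingEnd ℂ) z * w))

lemma atanh'_mono {x y : ℝ} (hx : 0 ≤ x) (hxy : x ≤ y) (hy : y < 1) : atanh' x ≤ atanh' y := by
  unfold atanh'
  have h1 : (0:ℝ) < 1 - y := by linarith
  have h2 : (0:ℝ) < 1 - x := by linarith
  have h3 : (0:ℝ) < (1+x)/(1-x) := by positivity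
  have : (1+x)/(1-x) ≤ (1+y)/(1-y) := by
    rw [div_le_div_iff₀ h2 h1]; nlinarith
  have := Real.log_le_log h3 this
  linarith

lemma atanh'_lt {x y : ℝ} (hx : 0 ≤ x) (hxy : x < y) (hy : y < 1) : atanh' x < atanh' y := by
  unfold atanh'
  have h1 : (0:ℝ) < 1 - y := by linarith
  have h2 : (0:ℝ) < 1 - x := by linarith
  have h3 : (0:ℝ) < (1+x)/(1-x) := by positivity
  have : (1+x)/(1-x) < (1+y)/(1-y) := by
    rw [div_lt_div_iff₀ h2 h1]; nlinarith
  have := Real.log_lt_log h3 this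
  linarith

lemma atanh'_nonneg {x : ℝ} (hx : 0 ≤ x) (hx1 : x < 1) : 0 ≤ atanh' x := by
  unfold atanh'
  have h2 : (0:ℝ) < 1 - x := by linarith
  have : (1:ℝ) ≤ (1+x)/(1-x) := by rw [le_div_iff₀ h2]; linarith
  have := Real.log_nonneg this
  linarith

lemma atanh'_pos {x : ℝ} (hx : 0 < x) (hx1 : x < 1) : 0 < atanh' x := by
  unfold atanh'
  have h2 : (0:ℝ) < 1 - x := by linarith
  have : (1:ℝ) < (1+x)/(1-x) := by rw [lt_div_iff₀ h2]; linarith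
  have := Real.log_pos this
  linarith

lemma atanh'_eq {y : ℝ} (h1 : -1 < y) (h2 : y < 1) :
    atanh' y = (1/2) * (Real.log (1+y) - Real.log (1-y)) := by
  unfold atanh'
  rw [Real.log_div (by linarith) (by linarith)]

lemma atanh'_exp (M : ℝ) (hM : 0 < M) :
    atanh' ((Real.exp (2*M) - 1)/(Real.exp (2*M) + 1)) = M := by
  have he : (0:ℝ) < Real.exp (2*M) := Real.exp_pos _
  have he1 : Real.exp (2*M) + 1 ≠ 0 := by positivity
  unfold atanh'
  have : (1 + (Real.exp (2*M) - 1)/(Real.exp (2*M) + 1)) /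
      (1 - (Real.exp (2*M) - 1)/(Real.exp (2*M) + 1)) = Real.exp (2*M) := by
    field_simp
    ring
  rw [this, Real.log_exp]
  ring


noncomputable def mob (a z : ℂ) : ℂ := (z - a) / (1 - (starRingEnd ℂ) a * z)

lemma key_id (z w : ℂ) :
    Complex.normSq (1 - (starRingEnd ℂ) z * w) - Complex.normSq (z - w) =
      (1 - Complex.normSq z) * (1 - Complex.normSq w) := by
  simp only [Complex.normSq_apply, Complex.mul_re, Complex.mul_im, Complex.sub_re,
    Complex.sub_im, Complex.one_re, Complex.one_im, Complex.conj_re, Complex.conj_im]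
  ring

lemma abs_sub_lt {z w : ℂ} (hz : Complex.abs z < 1) (hw : Complex.abs w < 1) :
    Complex.abs (z - w) < Complex.abs (1 - (starRingEnd ℂ) z * w) := by
  have h := key_id z w
  rw [← Complex.sq_abs z, ← Complex.sq_abs w, ← Complex.sq_abs (z-w),
    ← Complex.sq_abs (1 - (starRingEnd ℂ) z * w)] at h
  have hz2 : Complex.abs z ^ 2 < 1 := by nlinarith [Complex.abs.nonneg z]
  have hw2 : Complex.abs w ^ 2 < 1 := by nlinarith [Complex.abs.nonneg w]
  have h1 : Complex.abs (z - w) ^ 2 < Complex.abs (1 - (starRingEnd ℂ) z * w) ^ 2 := by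
    nlinarith [mul_pos (sub_pos.2 hz2) (sub_pos.2 hw2)]
  exact lt_of_pow_lt_pow_left₀ 2 (Complex.abs.nonneg _) h1

lemma denom_ne {z w : ℂ} (hz : Complex.abs z < 1) (hw : Complex.abs w < 1) :
    1 - (starRingEnd ℂ) z * w ≠ 0 := by
  intro h
  have := abs_sub_lt hz hw
  rw [h] at this
  simp at this
  exact absurd this (Complex.abs.nonneg _).not_gt

lemma rho_nonneg (z w : ℂ) : 0 ≤ rho z w := Complex.abs.nonneg _

lemma rho_lt_one {z w : ℂ} (hz : Complex.abs z < 1) (hw : Complex.abs w < 1) :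
    rho z w < 1 := by
  unfold rho
  rw [map_div₀, div_lt_one]
  · exact abs_sub_lt hz hw
  · have := abs_sub_lt hz hw
    have h0 : 0 ≤ Complex.abs (z - w) := Complex.abs.nonneg _
    linarith

lemma conj_denom (z w : ℂ) :
    Complex.abs (1 - (starRingEnd ℂ) w * z) = Complex.abs (1 - (starRingEnd ℂ) z * w) := by
  have : (1 - (starRingEnd ℂ) w * z) = (starRingEnd ℂ) (1 - (starRingEnd ℂ) z * w) := by
    simp [mul_comm]
  rw [this, Complex.abs_conj]

lemma rho_symm (z w : ℂ) : rho z w = rho w z := by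
  unfold rho
  rw [map_div₀, map_div₀, conj_denom w z, show z - w = -(w - z) by ring, Complex.abs.map_neg]

lemma abs_mob (a z : ℂ) : Complex.abs (mob a z) = rho z a := by
  unfold mob rho
  rw [map_div₀, map_div₀, conj_denom a z]

lemma mob_mem {a z : ℂ} (ha : Complex.abs a < 1) (hz : Complex.abs z < 1) :
    Complex.abs (mob a z) < 1 := by
  rw [abs_mob]; exact rho_lt_one hz ha

lemma mob_diff {a : ℂ} (ha : Complex.abs a < 1) :
    DifferentiableOn ℂ (mob a) (ball (0:ℂ) 1) := by
  apply DifferentiableOn.div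
  · exact (differentiable_id.sub_const a).differentiableOn
  · exact ((differentiable_const _).sub ((differentiable_id).const_mul _)).differentiableOn
  · intro z hz
    exact denom_ne ha (mem_ball_zero_iff.1 hz)

lemma mob_mob {a z : ℂ} (ha : Complex.abs a < 1) (hz : Complex.abs z < 1) :
    mob (-a) (mob a z) = z := by
  have d1 : 1 - (starRingEnd ℂ) a * z ≠ 0 := denom_ne ha hz
  have d2 : 1 - (starRingEnd ℂ) a * a ≠ 0 := denom_ne ha ha
  have d2' : (1:ℂ) - a * (starRingEnd ℂ) a ≠ 0 := by rwa [mul_comm] at d2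
  unfold mob
  rw [map_neg]
  have d1' : 1 - z * (starRingEnd ℂ) a ≠ 0 := by rwa [mul_comm] at d1
  rw [show (z - a) / (1 - (starRingEnd ℂ) a * z) - -a
      = z * (1 - a * (starRingEnd ℂ) a) / (1 - (starRingEnd ℂ) a * z) by
      rw [eq_div_iff d1]; linear_combination div_mul_cancel₀ (z - a) d1,
    show 1 - -(starRingEnd ℂ) a * ((z - a) / (1 - (starRingEnd ℂ) a * z))
      = (1 - a * (starRingEnd ℂ) a) / (1 - (starRingEnd ℂ) a * z) by
      rw [eq_div_iff d1]; linear_combination (starRingEnd ℂ) a * div_mul_cancel₀ (z - a) d1,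
    div_div_div_cancel_right₀ d1, mul_div_assoc, div_self d2', mul_one]

lemma mob_mapsTo {a : ℂ} (ha : Complex.abs a < 1) :
    MapsTo (mob a) (ball (0:ℂ) 1) (ball (0:ℂ) 1) := fun z hz =>
  mem_ball_zero_iff.2 (mob_mem ha (mem_ball_zero_iff.1 hz))

lemma schwarz_pick {f : ℂ → ℂ} (hd : DifferentiableOn ℂ f (ball (0:ℂ) 1))
    (hm : MapsTo f (ball (0:ℂ) 1) (ball (0:ℂ) 1)) {z w : ℂ}
    (hz : Complex.abs z < 1) (hw : Complex.abs w < 1) :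
    rho (f z) (f w) ≤ rho z w := by
  have hw' : w ∈ ball (0:ℂ) 1 := mem_ball_zero_iff.2 hw
  have hfw : Complex.abs (f w) < 1 := mem_ball_zero_iff.1 (hm hw')
  have hnegw : Complex.abs (-w) < 1 := by rwa [Complex.abs.map_neg]
  set g : ℂ → ℂ := fun ζ => mob (f w) (f (mob (-w) ζ)) with hg
  have hgd : DifferentiableOn ℂ g (ball (0:ℂ) 1) := by
    apply ((mob_diff hfw).comp (hd.comp (mob_diff hnegw) (mob_mapsTo hnegw))
      (hm.comp (mob_mapsTo hnegw)))
  have hgm : MapsTo g (ball (0:ℂ) 1) (ball (0:ℂ) 1) :=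
    (mob_mapsTo hfw).comp ((hm.comp (mob_mapsTo hnegw)))
  have hg0 : g 0 = 0 := by
    have h1 : mob (-w) 0 = w := by simp [mob]
    have h2 : mob (f w) (f w) = 0 := by simp [mob]
    simp [hg, h1, h2]
  have hζ : Complex.abs (mob w z) < 1 := mob_mem hw hz
  have key := Complex.abs_le_abs_of_mapsTo_ball_self hgd hgm hg0 hζ
  have hmm : mob (-w) (mob w z) = z := mob_mob hw hz
  rw [hg] at key
  simp only [hmm] at key
  rwa [abs_mob, abs_mob] at key

lemma rho_mob_inv {p z w : ℂ} (hp : Complex.abs p < 1) (hz : Complex.abs z < 1)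
    (hw : Complex.abs w < 1) : rho (mob p z) (mob p w) = rho z w := by
  have hnegp : Complex.abs (-p) < 1 := by rwa [Complex.abs.map_neg]
  apply le_antisymm
  · exact schwarz_pick (mob_diff hp) (mob_mapsTo hp) hz hw
  · have := schwarz_pick (mob_diff hnegp) (mob_mapsTo hnegp) (mob_mem hp hz) (mob_mem hp hw)
    rwa [mob_mob hp hz, mob_mob hp hw] at this

lemma one_sub_abs_le (x : ℂ) : 1 - Complex.abs x ≤ Complex.abs (1 - x) := by
  have := Complex.abs.add_le (1 - x) x
  simp only [sub_add_cancel, Complex.abs.map_one] at this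
  linarith

lemma rho_self_bound {m : ℝ} {a b : ℂ} (hm1 : m < 1) (ha : Complex.abs a ≤ m)
    (hb : Complex.abs b ≤ m) : rho a b ≤ 2*m/(1+m^2) := by
  have hm0 : 0 ≤ m := le_trans (Complex.abs.nonneg a) ha
  have ha1 : Complex.abs a < 1 := lt_of_le_of_lt ha hm1
  have hb1 : Complex.abs b < 1 := lt_of_le_of_lt hb hm1
  have hB0 : 0 < Complex.abs (1 - (starRingEnd ℂ) a * b) :=
    lt_of_le_of_lt (Complex.abs.nonneg _) (abs_sub_lt ha1 hb1)
  set A := Complex.abs (a - b) with hA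
  set B := Complex.abs (1 - (starRingEnd ℂ) a * b) with hB
  have hA0 : 0 ≤ A := Complex.abs.nonneg _
  have hid := key_id a b
  rw [← Complex.sq_abs (1 - (starRingEnd ℂ) a * b), ← Complex.sq_abs (a - b),
    ← Complex.sq_abs a, ← Complex.sq_abs b, ← hA, ← hB] at hid
  have hBle : B ≤ 1 + m^2 := by
    have h1 : Complex.abs ((starRingEnd ℂ) a * b) ≤ m^2 := by
      rw [map_mul, Complex.abs_conj]
      calc Complex.abs a * Complex.abs b ≤ m * m :=
        mul_le_mul ha hb (Complex.abs.nonneg _) hm0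
      _ = m^2 := by ring
    calc B ≤ Complex.abs 1 + Complex.abs ((starRingEnd ℂ) a * b) := by
          rw [hB]; exact Complex.abs.sub_le_add _ _
      _ ≤ 1 + m^2 := by rw [Complex.abs.map_one]; linarith
  have hfac : (1 - m^2)^2 ≤ B^2 - A^2 := by
    rw [hid]
    have h1 : 1 - m^2 ≤ 1 - Complex.abs a ^2 := by nlinarith [Complex.abs.nonneg a]
    have h2 : 1 - m^2 ≤ 1 - Complex.abs b ^2 := by nlinarith [Complex.abs.nonneg b]
    have hma : (0:ℝ) ≤ 1 - m^2 := by nlinarith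
    have hmb : (0:ℝ) ≤ 1 - Complex.abs a ^2 := by nlinarith [Complex.abs.nonneg a]
    nlinarith [mul_le_mul h1 h2 hma hmb]
  have hgoal : A * (1 + m^2) ≤ 2*m*B := by
    have hB2 : B^2 ≤ (1+m^2)^2 := by nlinarith [mul_le_mul hBle hBle hB0.le (by positivity : (0:ℝ) ≤ 1 + m^2)]
    have hsq : (A*(1+m^2))^2 ≤ (2*m*B)^2 := by
      nlinarith [mul_le_mul_of_nonneg_right hfac (by positivity : (0:ℝ) ≤ (1+m^2)^2),
        mul_nonneg (sq_nonneg (1-m^2)) (sub_nonneg.2 hB2)]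
    have h1 := Real.sqrt_le_sqrt hsq
    rw [Real.sqrt_sq (by positivity), Real.sqrt_sq (by positivity)] at h1
    exact h1
  have : rho a b = A / B := by rw [rho, map_div₀, ← hA, ← hB]
  rw [this, div_le_div_iff₀ hB0 (by positivity : (0:ℝ) < 1 + m^2)]
  linarith

lemma rho_scale {a b : ℂ} {m r δ : ℝ} (hm1 : m < 1) (ha : Complex.abs a ≤ m)
    (hb : Complex.abs b ≤ m) (hr1 : r ≤ 1) (hrm : m < r) (hδ : 0 < δ)
    (hK : (1+δ)*(1-r^2) ≤ δ*(1-m^2)) :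
    rho (a/(r:ℂ)) (b/(r:ℂ)) ≤ (1+δ) * rho a b := by
  have hm0 : 0 ≤ m := le_trans (Complex.abs.nonneg a) ha
  have hr0 : 0 < r := lt_of_le_of_lt hm0 hrm
  have hrC : (r:ℂ) ≠ 0 := by exact_mod_cast hr0.ne'
  have ha1 : Complex.abs a < 1 := lt_of_le_of_lt ha hm1
  have hb1 : Complex.abs b < 1 := lt_of_le_of_lt hb hm1
  set A := Complex.abs (a - b) with hA
  set B := Complex.abs (1 - (starRingEnd ℂ) a * b) with hB
  have hA0 : 0 ≤ A := Complex.abs.nonneg _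
  have hB1 : 1 - m^2 ≤ B := by
    have h1 : Complex.abs ((starRingEnd ℂ) a * b) ≤ m^2 := by
      rw [map_mul, Complex.abs_conj]
      calc Complex.abs a * Complex.abs b ≤ m * m :=
        mul_le_mul ha hb (Complex.abs.nonneg _) hm0
      _ = m^2 := by ring
    calc 1 - m^2 ≤ 1 - Complex.abs ((starRingEnd ℂ) a * b) := by linarith
      _ ≤ B := one_sub_abs_le _
  have hB0 : 0 < B := lt_of_lt_of_le (by nlinarith) hB1
  -- the rescaled denominator
  have hr2m : 1 - r^2 < 1 - m^2 := by nlinarith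
  set D := Complex.abs (((r:ℂ))^2 - (starRingEnd ℂ) a * b) with hD
  have hDge : B - (1-r^2) ≤ D := by
    have tri : B ≤ Complex.abs ((1:ℂ) - ((r:ℂ))^2) + D := by
      rw [hB, hD]
      calc Complex.abs (1 - (starRingEnd ℂ) a * b)
          = Complex.abs ((1 - ((r:ℂ))^2) + (((r:ℂ))^2 - (starRingEnd ℂ) a * b)) := by
            ring_nf
        _ ≤ _ := Complex.abs.add_le _ _
    have habs : Complex.abs ((1:ℂ) - ((r:ℂ))^2) = 1 - r^2 := by
      rw [show ((1:ℂ) - ((r:ℂ))^2) = (((1 - r^2 : ℝ)):ℂ) by push_cast; ring,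
        Complex.abs_ofReal, _root_.abs_of_nonneg (by nlinarith : (0:ℝ) ≤ 1 - r^2)]
    rw [habs] at tri
    linarith
  have hD0 : 0 < D := by linarith
  have hDne : ((r:ℂ))^2 - (starRingEnd ℂ) a * b ≠ 0 := by
    intro h
    rw [hD, h] at hD0
    simp at hD0
  -- rewrite rho (a/r) (b/r)
  have heq : rho (a/(r:ℂ)) (b/(r:ℂ)) = r * A / D := by
    have e1 : a/(r:ℂ) - b/(r:ℂ) = (a - b)/(r:ℂ) := div_sub_div_same a b (r:ℂ)
    have e2 : 1 - (starRingEnd ℂ) (a/(r:ℂ)) * (b/(r:ℂ))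
        = (((r:ℂ))^2 - (starRingEnd ℂ) a * b) / ((r:ℂ))^2 := by
      rw [map_div₀, Complex.conj_ofReal]
      field_simp
    rw [rho, e1, e2, map_div₀, map_div₀, map_div₀, ← hD, map_pow, Complex.abs_ofReal,
      _root_.abs_of_nonneg hr0.le, ← hA]
    field_simp
  rw [heq]
  have hrho : rho a b = A / B := by rw [rho, map_div₀, ← hA, ← hB]
  rw [hrho]
  have hstep : r * B ≤ (1+δ) * D := by
    have h1 : B ≤ (1+δ) * (B - (1-r^2)) := by nlinarith
    calc r * B ≤ 1 * B := by nlinarith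
      _ = B := one_mul B
      _ ≤ (1+δ) * (B - (1-r^2)) := h1
      _ ≤ (1+δ) * D := by nlinarith
  rw [show (1+δ) * (A/B) = ((1+δ)*A)/B by ring, div_le_div_iff₀ hD0 hB0]
  nlinarith [mul_le_mul_of_nonneg_left hstep hA0]



lemma atanh'_comparison {c K m₂ s : ℝ} (hc : 1 < c) (hK1 : 1 ≤ K) (hs1 : s < 1)
    (hKm : K * m₂ ≤ s) (hm₂0 : 0 ≤ m₂)
    (hineq : ∀ x, 0 ≤ x → x ≤ m₂ → K * (1 - x^2) ≤ c * (1 - (K*x)^2)) :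
    ∀ x, 0 ≤ x → x ≤ m₂ → atanh' (K * x) ≤ c * atanh' x := by
  have hm₂1 : m₂ < 1 := by nlinarith
  have hK0 : 0 < K := by linarith
  set g : ℝ → ℝ := fun x => c * ((1/2) * (Real.log (1+x) - Real.log (1-x)))
    - (1/2) * (Real.log (1+K*x) - Real.log (1-K*x)) with hg
  have hds : ∀ x ∈ Icc (0:ℝ) m₂,
      HasDerivAt g (c * ((1/2) * (1/(1+x) - (-1)/(1-x)))
        - (1/2) * (K/(1+K*x) - (-K)/(1-K*x))) x := by
    intro x hx
    obtain ⟨hx0, hxm⟩ := hx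
    have hx1 : x < 1 := lt_of_le_of_lt hxm hm₂1
    have hKx : K * x ≤ s := le_trans (by nlinarith) hKm
    have d1 : (1:ℝ) + x ≠ 0 := by linarith
    have d2 : (1:ℝ) - x ≠ 0 := by linarith
    have d3 : (1:ℝ) + K*x ≠ 0 := by nlinarith
    have d4 : (1:ℝ) - K*x ≠ 0 := by nlinarith
    have h1 : HasDerivAt (fun x : ℝ => Real.log (1+x)) (1/(1+x)) x := by
      have := ((hasDerivAt_id x).const_add (1:ℝ)).log d1
      simpa using this
    have h2 : HasDerivAt (fun x : ℝ => Real.log (1-x)) ((-1)/(1-x)) x := by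
      have := ((hasDerivAt_id x).const_sub (1:ℝ)).log d2
      simpa using this
    have hKi : HasDerivAt (fun x : ℝ => K * x) K x := by
      simpa using (hasDerivAt_id x).const_mul K
    have h3 : HasDerivAt (fun x : ℝ => Real.log (1+K*x)) (K/(1+K*x)) x := by
      have := (hKi.const_add (1:ℝ)).log d3
      simpa using this
    have h4 : HasDerivAt (fun x : ℝ => Real.log (1-K*x)) ((-K)/(1-K*x)) x := by
      have := (hKi.const_sub (1:ℝ)).log d4
      simpa using this
    exact (((h1.sub h2).const_mul (1/2:ℝ)).const_mul c).sub ((h3.sub h4).const_mul (1/2:ℝ))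
  have hmono : MonotoneOn g (Icc (0:ℝ) m₂) := by
    apply monotoneOn_of_deriv_nonneg (convex_Icc 0 m₂)
    · exact fun x hx => ((hds x hx).differentiableAt).continuousAt.continuousWithinAt
    · intro x hx
      rw [interior_Icc] at hx
      exact ((hds x ⟨hx.1.le, hx.2.le⟩).differentiableAt).differentiableWithinAt
    · intro x hx
      rw [interior_Icc] at hx
      obtain ⟨hx0, hxm⟩ := hx
      rw [(hds x ⟨hx0.le, hxm.le⟩).deriv]
      have hx1 : x < 1 := lt_of_lt_of_le hxm hm₂1.le
      have hKx : K * x ≤ s := le_trans (by nlinarith) hKm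
      have d1 : (0:ℝ) < 1 + x := by linarith
      have d2 : (0:ℝ) < 1 - x := by linarith
      have d3 : (0:ℝ) < 1 + K*x := by nlinarith
      have d4 : (0:ℝ) < 1 - K*x := by nlinarith
      have e1 : c * ((1/2) * (1/(1+x) - (-1)/(1-x))) = c / ((1+x)*(1-x)) := by
        field_simp
        ring
      have e2 : (1/2:ℝ) * (K/(1+K*x) - (-K)/(1-K*x)) = K / ((1+K*x)*(1-K*x)) := by
        field_simp
        ring
      rw [e1, e2, sub_nonneg, div_le_div_iff₀ (by positivity) (by positivity)]
      have := hineq x hx0.le hxm.le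
      nlinarith
  intro x hx0 hxm
  have hx1 : x < 1 := lt_of_le_of_lt hxm hm₂1
  have hKx : K * x ≤ s := le_trans (by nlinarith) hKm
  have hKx0 : 0 ≤ K * x := by positivity
  have h0 : g 0 ≤ g x := hmono (left_mem_Icc.2 hm₂0) ⟨hx0, hxm⟩ hx0
  have hg0 : g 0 = 0 := by simp [hg]
  rw [hg0] at h0
  rw [atanh'_eq (by linarith : (-1:ℝ) < K*x) (by linarith), atanh'_eq (by linarith) hx1]
  simp only [hg] at h0
  linarith

lemma poincare_eq (z w : ℂ) : poincare z w = atanh' (rho z w) := rfl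

lemma delta_ineq {c m₂ δ x : ℝ} (hc : 1 < c) (hδ0 : 0 < δ) (hδ1 : δ ≤ 1)
    (hδ3 : δ*(1+6*c) ≤ (c-1)*(1-m₂^2)) (hx2 : x^2 ≤ m₂^2) (hx21 : x^2 ≤ 1) :
    (1+δ)*(1-x^2) ≤ c*(1-((1+δ)*x)^2) := by
  have e : c*(1-((1+δ)*x)^2) - (1+δ)*(1-x^2)
      = (c-1-δ) - ((1+δ)*(c*(1+δ)-1))*x^2 := by ring
  have b1 : (1+δ)*(c*(1+δ)-1) ≤ (c-1) + 3*c*δ := by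
    nlinarith [mul_nonneg (mul_nonneg (by linarith : (0:ℝ) ≤ c) hδ0.le)
      (by linarith : (0:ℝ) ≤ 1-δ)]
  have b1' : ((1+δ)*(c*(1+δ)-1))*x^2 ≤ ((c-1) + 3*c*δ)*x^2 :=
    mul_le_mul_of_nonneg_right b1 (sq_nonneg x)
  have b2a : (c-1)*x^2 ≤ (c-1)*m₂^2 := mul_le_mul_of_nonneg_left hx2 (by linarith)
  have b2b : 3*c*δ*x^2 ≤ 3*c*δ := by
    nlinarith [mul_nonneg hδ0.le (by linarith : (0:ℝ) ≤ 3*c)]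
  have b3 : (c-1)*m₂^2 + 3*c*δ ≤ c-1-δ := by
    nlinarith [mul_nonneg hδ0.le (by linarith : (0:ℝ) ≤ 3*c)]
  nlinarith [b1', b2a, b2b, b3, e]


set_option maxHeartbeats 1000000 in
/-- for all `c > 1` and `M > 0`, there exists `R > 0` such that for
every `p ∈ 𝔻` and all `z, w ∈ D^{hyp}(p, M)`, the intrinsic hyperbolic distance
of `D^{hyp}(p, R)` (transported from the disc via any Riemann map `h`) satisfies
`k_{D^{hyp}(p,R)}(z, w) ≤ c·ω(z, w)`. -/
theorem hyp_dist_in_hyp_disc :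
    ∀ c > (1:ℝ), ∀ M > (0:ℝ), ∃ R > (0:ℝ), ∀ p ∈ Metric.ball (0:ℂ) 1,
      ∀ h : ℂ → ℂ, DifferentiableOn ℂ h (hypDisc p R) →
        Set.BijOn h (hypDisc p R) (Metric.ball (0:ℂ) 1) →
        ∀ z ∈ hypDisc p M, ∀ w ∈ hypDisc p M,
          poincare (h z) (h w) ≤ c * poincare z w := by
  intro c hc M hM
  -- basic constants
  set m : ℝ := (Real.exp (2*M) - 1)/(Real.exp (2*M) + 1) with hm_def
  have he1 : 1 < Real.exp (2*M) := by
    have : Real.exp 0 < Real.exp (2*M) := Real.exp_lt_exp.2 (by linarith)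
    rwa [Real.exp_zero] at this
  have hm0 : 0 < m := div_pos (by linarith) (by linarith)
  have hm1 : m < 1 := by rw [div_lt_one (by linarith)]; linarith
  have hatanh_m : atanh' m = M := atanh'_exp M hM
  set m₂ : ℝ := 2*m/(1+m^2) with hm2_def
  have hm₂0 : 0 < m₂ := by positivity
  have hm₂1 : m₂ < 1 := by rw [div_lt_one (by positivity)]; nlinarith
  set s : ℝ := (1+m₂)/2 with hs_def
  have hs1 : s < 1 := by rw [hs_def]; linarith
  clear_value m m₂ s
  -- the stretching constant δ
  set δ : ℝ := min ((c-1)*(1-m₂^2)/(1+6*c)) (min 1 ((1-m₂)/2)) with hδ_def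
  have hδ0 : 0 < δ := by
    apply lt_min
    · exact div_pos (mul_pos (by linarith) (by nlinarith)) (by linarith)
    · exact lt_min one_pos (by linarith)
  have hδ1 : δ ≤ 1 := le_trans (min_le_right _ _) (min_le_left _ _)
  have hδ2 : δ ≤ (1-m₂)/2 := le_trans (min_le_right _ _) (min_le_right _ _)
  have hδ3 : δ*(1+6*c) ≤ (c-1)*(1-m₂^2) := by
    have h1 : δ ≤ (c-1)*(1-m₂^2)/(1+6*c) := min_le_left _ _
    rw [le_div_iff₀ (by linarith)] at h1
    exact h1
  clear_value δ
  have hKm : (1+δ)*m₂ ≤ s := by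
    have : δ * m₂ ≤ δ := mul_le_of_le_one_right hδ0.le hm₂1.le
    rw [hs_def]; nlinarith
  have hineq : ∀ x, 0 ≤ x → x ≤ m₂ → (1+δ)*(1-x^2) ≤ c*(1-((1+δ)*x)^2) := by
    intro x hx0 hxm
    have hx2 : x^2 ≤ m₂^2 := by nlinarith
    have hx21 : x^2 ≤ 1 := by nlinarith
    exact delta_ineq hc hδ0 hδ1 hδ3 hx2 hx21
  -- choose the radius r of the rescaled disc
  set ε : ℝ := min (δ*(1-m^2)/2) ((1-m^2)/2) with hε_def
  have h1m2 : (0:ℝ) < 1 - m^2 := by nlinarith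
  have hε0 : 0 < ε := lt_min (div_pos (mul_pos hδ0 h1m2) two_pos) (div_pos h1m2 two_pos)
  have hε1 : ε ≤ (1-m^2)/2 := min_le_right _ _
  have hε2 : ε ≤ δ*(1-m^2)/2 := min_le_left _ _
  clear_value ε
  set r : ℝ := Real.sqrt (1-ε) with hr_def
  have h1ε : 0 ≤ 1 - ε := by nlinarith
  have hr2 : r^2 = 1-ε := Real.sq_sqrt h1ε
  have hr0 : 0 ≤ r := Real.sqrt_nonneg _
  clear_value r
  have hr1 : r < 1 := by nlinarith [sq_nonneg (r-1), hr2, hε0]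
  have hrm : m < r := by
    by_contra hcon
    push_neg at hcon
    have := mul_self_le_mul_self hr0 hcon
    nlinarith [mul_self_lt_mul_self hm0.le hm1, hr2, hε1]
  have hr0' : 0 < r := lt_of_le_of_lt hm0.le hrm
  have hrC : (r:ℂ) ≠ 0 := by exact_mod_cast hr0'.ne'
  have hK : (1+δ)*(1-r^2) ≤ δ*(1-m^2) := by
    rw [hr2]
    nlinarith [hε2, hε0, mul_le_of_le_one_left hε0.le hδ1]
  refine ⟨atanh' r, atanh'_pos hr0' hr1, ?_⟩
  intro p hp h hdiff hbij z hz w hw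
  rw [mem_ball_zero_iff] at hp
  have hp' : Complex.abs p < 1 := hp
  have hnegp : Complex.abs (-p) < 1 := by rwa [Complex.abs.map_neg]
  obtain ⟨hz1, hz2⟩ := hz
  obtain ⟨hw1, hw2⟩ := hw
  have hz1' : Complex.abs z < 1 := mem_ball_zero_iff.1 hz1
  have hw1' : Complex.abs w < 1 := mem_ball_zero_iff.1 hw1
  -- rho to the center is less than m
  have hrzp : rho z p < m := by
    by_contra hcon
    push_neg at hcon
    have := atanh'_mono hm0.le hcon (rho_lt_one hz1' hp')
    rw [hatanh_m] at this
    rw [poincare_eq] at hz2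
    linarith
  have hrwp : rho w p < m := by
    by_contra hcon
    push_neg at hcon
    have := atanh'_mono hm0.le hcon (rho_lt_one hw1' hp')
    rw [hatanh_m] at this
    rw [poincare_eq] at hw2
    linarith
  set a : ℂ := mob p z with ha_def
  set b : ℂ := mob p w with hb_def
  have ha : Complex.abs a ≤ m := by rw [ha_def, abs_mob]; exact hrzp.le
  have hb : Complex.abs b ≤ m := by rw [hb_def, abs_mob]; exact hrwp.le
  have hρab : rho a b = rho z w := rho_mob_inv hp' hz1' hw1'
  have hab2 : rho a b ≤ m₂ := by rw [hm2_def]; exact rho_self_bound hm1 ha hb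
  -- the composed map F
  set φ : ℂ → ℂ := fun ζ => mob (-p) ((r:ℂ)*ζ) with hφ_def
  have hmul_maps : Set.MapsTo (fun ζ : ℂ => (r:ℂ)*ζ) (Metric.ball 0 1) (Metric.ball 0 1) := by
    intro ζ hζ
    have hζ' := mem_ball_zero_iff.1 hζ
    rw [mem_ball_zero_iff]
    calc ‖(r:ℂ)*ζ‖ = r * ‖ζ‖ := by
          rw [norm_mul, Complex.norm_real, Real.norm_eq_abs, _root_.abs_of_nonneg hr0]
      _ < 1 := by nlinarith [norm_nonneg ζ]
  have habs_rζ : ∀ ζ : ℂ, Complex.abs ζ < 1 → Complex.abs ((r:ℂ)*ζ) < r := by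
    intro ζ hζ
    rw [map_mul, Complex.abs_ofReal, _root_.abs_of_nonneg hr0]
    nlinarith [Complex.abs.nonneg ζ]
  have hφm : Set.MapsTo φ (Metric.ball 0 1) (hypDisc p (atanh' r)) := by
    intro ζ hζ
    have hζ' := mem_ball_zero_iff.1 hζ
    have hrζ : Complex.abs ((r:ℂ)*ζ) < r := habs_rζ ζ hζ'
    have hrζ1 : Complex.abs ((r:ℂ)*ζ) < 1 := lt_trans hrζ hr1
    have hu1 : Complex.abs (mob (-p) ((r:ℂ)*ζ)) < 1 := mob_mem hnegp hrζ1
    refine ⟨mem_ball_zero_iff.2 hu1, ?_⟩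
    have hmm := mob_mob hnegp hrζ1
    rw [neg_neg] at hmm
    have hru : rho (mob (-p) ((r:ℂ)*ζ)) p = Complex.abs ((r:ℂ)*ζ) := by
      rw [← abs_mob p, hmm]
    rw [poincare_eq, hφ_def]
    simp only []
    rw [hru]
    exact atanh'_lt (Complex.abs.nonneg _) hrζ hr1
  have hφd : DifferentiableOn ℂ φ (Metric.ball 0 1) :=
    (mob_diff hnegp).comp ((differentiable_id.const_mul ((r:ℂ))).differentiableOn) hmul_maps
  set F : ℂ → ℂ := fun ζ => h (φ ζ) with hF_def
  have hFd : DifferentiableOn ℂ F (Metric.ball 0 1) := hdiff.comp hφd hφm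
  have hFm : Set.MapsTo F (Metric.ball 0 1) (Metric.ball 0 1) := hbij.mapsTo.comp hφm
  set ζ1 : ℂ := a/(r:ℂ) with hζ1_def
  set ζ2 : ℂ := b/(r:ℂ) with hζ2_def
  have hζ1 : Complex.abs ζ1 < 1 := by
    rw [hζ1_def, map_div₀, Complex.abs_ofReal, _root_.abs_of_nonneg hr0, div_lt_one hr0']
    exact lt_of_le_of_lt ha hrm
  have hζ2 : Complex.abs ζ2 < 1 := by
    rw [hζ2_def, map_div₀, Complex.abs_ofReal, _root_.abs_of_nonneg hr0, div_lt_one hr0']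
    exact lt_of_le_of_lt hb hrm
  have hSP := schwarz_pick hFd hFm hζ1 hζ2
  have hFζ1 : F ζ1 = h z := by
    rw [hF_def]
    simp only []
    rw [hφ_def]
    simp only []
    rw [hζ1_def, mul_div_cancel₀ a hrC, ha_def, mob_mob hp' hz1']
  have hFζ2 : F ζ2 = h w := by
    rw [hF_def]
    simp only []
    rw [hφ_def]
    simp only []
    rw [hζ2_def, mul_div_cancel₀ b hrC, hb_def, mob_mob hp' hw1']
  rw [hFζ1, hFζ2] at hSP
  have hscale : rho ζ1 ζ2 ≤ (1+δ) * rho a b :=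
    rho_scale hm1 ha hb hr1.le hrm hδ0 hK
  have hbound : (1+δ) * rho a b < 1 := by
    have h1 : (1+δ) * rho a b ≤ (1+δ) * m₂ :=
      mul_le_mul_of_nonneg_left hab2 (by linarith)
    linarith [lt_of_le_of_lt (le_trans h1 hKm) hs1]
  calc poincare (h z) (h w) = atanh' (rho (h z) (h w)) := rfl
    _ ≤ atanh' (rho ζ1 ζ2) := atanh'_mono (rho_nonneg _ _) hSP (rho_lt_one hζ1 hζ2)
    _ ≤ atanh' ((1+δ) * rho a b) := atanh'_mono (rho_nonneg _ _) hscale hbound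
    _ ≤ c * atanh' (rho a b) :=
      atanh'_comparison hc (by linarith) hs1 hKm hm₂0.le hineq (rho a b)
        (rho_nonneg _ _) hab2
    _ = c * atanh' (rho z w) := by rw [hρab]
    _ = c * poincare z w := rfl
end

section
/- Let (φ_t) be a one-parameter semigroup of holomorphic self-maps of 𝔻, not a group, and let Δ be a petal (a connected component of the interior of the backward invariant set). Then φ_t(Δ) = Δ for all t ≥ 0, and for each t ≥ 0 the restriction φ_t|_Δ is a (holomorphic) automorphism of Δ. -/
/-- The backward invariant set `𝒲 = ⋂_{t ≥ 0} φ_t(𝔻)` of a semigroup. -/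
def bwdInv (φ : ℝ → ℂ → ℂ) : Set ℂ :=
  ⋂ t ∈ Set.Ici (0:ℝ), φ t '' Metric.ball (0:ℂ) 1

section aux

variable {φ : ℝ → ℂ → ℂ}

lemma mem_bwdInv_iff {w : ℂ} :
    w ∈ bwdInv φ ↔ ∀ t ≥ (0:ℝ), w ∈ φ t '' Metric.ball (0:ℂ) 1 := by
  simp [bwdInv]

lemma bwdInv_subset_ball (hid : ∀ z ∈ Metric.ball (0:ℂ) 1, φ 0 z = z) :
    bwdInv φ ⊆ Metric.ball (0:ℂ) 1 := by
  intro w hw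
  obtain ⟨z, hz, hzw⟩ := mem_bwdInv_iff.mp hw 0 le_rfl
  rw [hid z hz] at hzw
  exact hzw ▸ hz

/-- Forward invariance of `𝒲`. -/
lemma bwdInv_fwd (hmaps : ∀ t ≥ (0:ℝ), Set.MapsTo (φ t) (Metric.ball (0:ℂ) 1) (Metric.ball (0:ℂ) 1))
    (hsem : ∀ s ≥ (0:ℝ), ∀ t ≥ (0:ℝ), ∀ z ∈ Metric.ball (0:ℂ) 1, φ s (φ t z) = φ (s + t) z)
    (hid : ∀ z ∈ Metric.ball (0:ℂ) 1, φ 0 z = z)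
    {t : ℝ} (ht : 0 ≤ t) : φ t '' bwdInv φ ⊆ bwdInv φ := by
  rintro _ ⟨w, hw, rfl⟩
  have hwD : w ∈ Metric.ball (0:ℂ) 1 := bwdInv_subset_ball hid hw
  rw [mem_bwdInv_iff]
  intro s hs
  rcases le_total s t with hst | hts
  · refine ⟨φ (t - s) w, hmaps _ (by linarith) hwD, ?_⟩
    rw [hsem s hs (t - s) (by linarith) w hwD]
    ring_nf
  · obtain ⟨u, hu, huw⟩ := mem_bwdInv_iff.mp hw (s - t) (by linarith)
    refine ⟨u, hu, ?_⟩
    rw [← huw, hsem t ht (s - t) (by linarith) u hu]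
    ring_nf

/-- Backward invariance of `𝒲`. -/
lemma bwdInv_bwd (hmaps : ∀ t ≥ (0:ℝ), Set.MapsTo (φ t) (Metric.ball (0:ℂ) 1) (Metric.ball (0:ℂ) 1))
    (hinj : ∀ t ≥ (0:ℝ), Set.InjOn (φ t) (Metric.ball (0:ℂ) 1))
    (hsem : ∀ s ≥ (0:ℝ), ∀ t ≥ (0:ℝ), ∀ z ∈ Metric.ball (0:ℂ) 1, φ s (φ t z) = φ (s + t) z)
    {t : ℝ} (ht : 0 ≤ t) : bwdInv φ ⊆ φ t '' bwdInv φ := by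
  intro w hw
  obtain ⟨u, hu, huw⟩ := mem_bwdInv_iff.mp hw t ht
  refine ⟨u, ?_, huw⟩
  rw [mem_bwdInv_iff]
  intro s hs
  obtain ⟨v, hv, hvw⟩ := mem_bwdInv_iff.mp hw (t + s) (by linarith)
  have h1 : φ t (φ s v) = w := by
    rw [hsem t ht s hs v hv] ; exact hvw
  have h2 : φ s v ∈ Metric.ball (0:ℂ) 1 := hmaps s hs hv
  have := hinj t ht h2 hu (h1.trans huw.symm)
  exact ⟨v, hv, this⟩

/-- Open mapping property. -/
lemma phi_open (hholo : ∀ t ≥ (0:ℝ), DifferentiableOn ℂ (φ t) (Metric.ball (0:ℂ) 1))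
    (hinj : ∀ t ≥ (0:ℝ), Set.InjOn (φ t) (Metric.ball (0:ℂ) 1))
    {t : ℝ} (ht : 0 ≤ t) :
    ∀ s ⊆ Metric.ball (0:ℂ) 1, IsOpen s → IsOpen (φ t '' s) := by
  have han : AnalyticOnNhd ℂ (φ t) (Metric.ball (0:ℂ) 1) :=
    (hholo t ht).analyticOnNhd Metric.isOpen_ball
  rcases han.is_constant_or_isOpen (convex_ball (0:ℂ) 1).isPreconnected with ⟨w, hw⟩ | h
  · exfalso
    have h0 : (0:ℂ) ∈ Metric.ball (0:ℂ) 1 := Metric.mem_ball_self one_pos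
    have h2 : (1/2:ℂ) ∈ Metric.ball (0:ℂ) 1 := by
      simp [Metric.mem_ball]
      norm_num
    have := hinj t ht h0 h2 ((hw 0 h0).trans (hw _ h2).symm)
    norm_num at this
  · exact h

/-- The interior of `𝒲` is backward invariant. -/
lemma int_bwd (hmaps : ∀ t ≥ (0:ℝ), Set.MapsTo (φ t) (Metric.ball (0:ℂ) 1) (Metric.ball (0:ℂ) 1))
    (hholo : ∀ t ≥ (0:ℝ), DifferentiableOn ℂ (φ t) (Metric.ball (0:ℂ) 1))
    (hinj : ∀ t ≥ (0:ℝ), Set.InjOn (φ t) (Metric.ball (0:ℂ) 1))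
    (hsem : ∀ s ≥ (0:ℝ), ∀ t ≥ (0:ℝ), ∀ z ∈ Metric.ball (0:ℂ) 1, φ s (φ t z) = φ (s + t) z)
    (hid : ∀ z ∈ Metric.ball (0:ℂ) 1, φ 0 z = z)
    {t : ℝ} (ht : 0 ≤ t) :
    interior (bwdInv φ) ⊆ φ t '' interior (bwdInv φ) := by
  intro w hw
  have hwW : w ∈ bwdInv φ := interior_subset hw
  obtain ⟨u, hu, huw⟩ := bwdInv_bwd hmaps hinj hsem ht hwW
  set U : Set ℂ := Metric.ball (0:ℂ) 1 ∩ (φ t) ⁻¹' (interior (bwdInv φ)) with hU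
  have hUopen : IsOpen U :=
    (hholo t ht).continuousOn.isOpen_inter_preimage Metric.isOpen_ball isOpen_interior
  have hUW : U ⊆ bwdInv φ := by
    rintro x ⟨hxD, hx⟩
    obtain ⟨y, hyW, hyx⟩ := bwdInv_bwd hmaps hinj hsem ht (interior_subset hx)
    have : x = y := hinj t ht hxD (bwdInv_subset_ball hid hyW) hyx.symm
    exact this ▸ hyW
  have hUint : U ⊆ interior (bwdInv φ) := interior_maximal hUW hUopen
  refine ⟨u, hUint ⟨bwdInv_subset_ball hid hu, ?_⟩, huw⟩
  simpa [huw] using hw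

/-- The interior of `𝒲` is forward invariant. -/
lemma int_fwd (hmaps : ∀ t ≥ (0:ℝ), Set.MapsTo (φ t) (Metric.ball (0:ℂ) 1) (Metric.ball (0:ℂ) 1))
    (hholo : ∀ t ≥ (0:ℝ), DifferentiableOn ℂ (φ t) (Metric.ball (0:ℂ) 1))
    (hinj : ∀ t ≥ (0:ℝ), Set.InjOn (φ t) (Metric.ball (0:ℂ) 1))
    (hsem : ∀ s ≥ (0:ℝ), ∀ t ≥ (0:ℝ), ∀ z ∈ Metric.ball (0:ℂ) 1, φ s (φ t z) = φ (s + t) z)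
    (hid : ∀ z ∈ Metric.ball (0:ℂ) 1, φ 0 z = z)
    {t : ℝ} (ht : 0 ≤ t) :
    φ t '' interior (bwdInv φ) ⊆ interior (bwdInv φ) := by
  have hsub : interior (bwdInv φ) ⊆ Metric.ball (0:ℂ) 1 :=
    interior_subset.trans (bwdInv_subset_ball hid)
  refine interior_maximal ?_ (phi_open hholo hinj ht _ hsub isOpen_interior)
  exact (Set.image_mono interior_subset).trans (bwdInv_fwd hmaps hsem hid ht)

/-- The flow stays in the connected component. -/
lemma flow_in_component
    (hmaps : ∀ t ≥ (0:ℝ), Set.MapsTo (φ t) (Metric.ball (0:ℂ) 1) (Metric.ball (0:ℂ) 1))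
    (hholo : ∀ t ≥ (0:ℝ), DifferentiableOn ℂ (φ t) (Metric.ball (0:ℂ) 1))
    (hinj : ∀ t ≥ (0:ℝ), Set.InjOn (φ t) (Metric.ball (0:ℂ) 1))
    (hsem : ∀ s ≥ (0:ℝ), ∀ t ≥ (0:ℝ), ∀ z ∈ Metric.ball (0:ℂ) 1, φ s (φ t z) = φ (s + t) z)
    (hid : ∀ z ∈ Metric.ball (0:ℂ) 1, φ 0 z = z)
    (hcont : ContinuousOn (fun p : ℝ × ℂ => φ p.1 p.2)
      (Set.Ici (0:ℝ) ×ˢ Metric.ball (0:ℂ) 1))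
    {t : ℝ} (ht : 0 ≤ t) {z : ℂ} (hz : z ∈ interior (bwdInv φ)) :
    φ t z ∈ connectedComponentIn (interior (bwdInv φ)) z := by
  have hzD : z ∈ Metric.ball (0:ℂ) 1 := bwdInv_subset_ball hid (interior_subset hz)
  set K : Set ℂ := (fun s => φ s z) '' Set.Icc 0 t with hK
  have hc : ContinuousOn (fun s => φ s z) (Set.Icc 0 t) := by
    have : ContinuousOn (fun s : ℝ => φ s z) (Set.Ici (0:ℝ)) := by
      have := hcont.comp (Continuous.continuousOn (f := fun s : ℝ => ((s, z) : ℝ × ℂ))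
        (by continuity)) (fun s hs => Set.mk_mem_prod hs hzD)
      exact this
    exact this.mono Set.Icc_subset_Ici_self
  have hKpre : IsPreconnected K := isPreconnected_Icc.image _ hc
  have hKV : K ⊆ interior (bwdInv φ) := by
    rintro _ ⟨s, hs, rfl⟩
    exact int_fwd hmaps hholo hinj hsem hid hs.1 ⟨z, hz, rfl⟩
  have hzK : z ∈ K := ⟨0, Set.left_mem_Icc.mpr ht, hid z hzD⟩
  have := hKpre.subset_connectedComponentIn hzK hKV
  exact this ⟨t, Set.right_mem_Icc.mpr ht, rfl⟩

end aux

/-- if `(φ_t)` is a semigroup of holomorphic self-maps of `𝔻`, not a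
group, and `Δ` is a petal (a nonempty connected component of the interior of the
backward invariant set `𝒲`), then `φ_t(Δ) = Δ` for all `t ≥ 0` and each `φ_t`
restricts to a (holomorphic) automorphism of `Δ`. -/
theorem petal_invariance (φ : ℝ → ℂ → ℂ)
    (hmaps : ∀ t ≥ (0:ℝ), Set.MapsTo (φ t) (Metric.ball (0:ℂ) 1) (Metric.ball (0:ℂ) 1))
    (hholo : ∀ t ≥ (0:ℝ), DifferentiableOn ℂ (φ t) (Metric.ball (0:ℂ) 1))
    (hinj : ∀ t ≥ (0:ℝ), Set.InjOn (φ t) (Metric.ball (0:ℂ) 1))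
    (hsem : ∀ s ≥ (0:ℝ), ∀ t ≥ (0:ℝ), ∀ z ∈ Metric.ball (0:ℂ) 1, φ s (φ t z) = φ (s + t) z)
    (hid : ∀ z ∈ Metric.ball (0:ℂ) 1, φ 0 z = z)
    (hcont : ContinuousOn (fun p : ℝ × ℂ => φ p.1 p.2)
      (Set.Ici (0:ℝ) ×ˢ Metric.ball (0:ℂ) 1))
    (hng : ∃ t ≥ (0:ℝ), φ t '' Metric.ball (0:ℂ) 1 ≠ Metric.ball (0:ℂ) 1)
    (Δ : Set ℂ) (z₀ : ℂ) (hz₀ : z₀ ∈ interior (bwdInv φ))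
    (hΔ : Δ = connectedComponentIn (interior (bwdInv φ)) z₀) :
    ∀ t ≥ (0:ℝ), φ t '' Δ = Δ ∧ Set.BijOn (φ t) Δ Δ := by
  intro t ht
  set V := interior (bwdInv φ) with hV
  have hVD : V ⊆ Metric.ball (0:ℂ) 1 := interior_subset.trans (bwdInv_subset_ball hid)
  have himg : φ t '' Δ = Δ := by
    apply Set.Subset.antisymm
    · -- φ t '' Δ ⊆ Δ
      have hpre : IsPreconnected Δ := hΔ ▸ isPreconnected_connectedComponentIn
      have hΔV : Δ ⊆ V := hΔ ▸ connectedComponentIn_subset _ _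
      have hcΔ : ContinuousOn (φ t) Δ :=
        (hholo t ht).continuousOn.mono (hΔV.trans hVD)
      have hI : IsPreconnected (φ t '' Δ) := hpre.image _ hcΔ
      have hIV : φ t '' Δ ⊆ V :=
        (Set.image_mono hΔV).trans (int_fwd hmaps hholo hinj hsem hid ht)
      have hz₀Δ : z₀ ∈ Δ := hΔ ▸ mem_connectedComponentIn hz₀
      have hφz₀ : φ t z₀ ∈ Δ := hΔ ▸ flow_in_component hmaps hholo hinj hsem hid hcont ht hz₀
      have : φ t '' Δ ⊆ connectedComponentIn V (φ t z₀) :=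
        hI.subset_connectedComponentIn ⟨z₀, hz₀Δ, rfl⟩ hIV
      rwa [show connectedComponentIn V (φ t z₀) = Δ from by
        rw [hΔ]; exact (connectedComponentIn_eq (hΔ ▸ hφz₀)).symm] at this
    · -- Δ ⊆ φ t '' Δ
      intro w hw
      have hwV : w ∈ V := (hΔ ▸ connectedComponentIn_subset _ z₀) hw
      obtain ⟨u, hu, huw⟩ := int_bwd hmaps hholo hinj hsem hid ht hwV
      refine ⟨u, ?_, huw⟩
      have h1 : φ t u ∈ connectedComponentIn V u :=
        flow_in_component hmaps hholo hinj hsem hid hcont ht hu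
      have h2 : connectedComponentIn V u = connectedComponentIn V w := by
        rw [← huw]; exact (connectedComponentIn_eq h1)
      have h3 : connectedComponentIn V w = Δ := by
        rw [hΔ]; exact (connectedComponentIn_eq (hΔ ▸ hw)).symm
      rw [← h3, ← h2]
      exact mem_connectedComponentIn hu
  refine ⟨himg, ?_, ?_, ?_⟩
  · intro x hx; rw [← himg]; exact ⟨x, hx, rfl⟩
  · exact (hinj t ht).mono ((hΔ ▸ connectedComponentIn_subset _ z₀ : Δ ⊆ V).trans hVD)
  · intro x hx; rw [← himg] at hx; exact hx
end
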